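/- (L1 screening rule) Consider minimizing (1/2)‖y - Xβ‖₂² + ‖β‖₁ with primal minimizer β̂ and dual maximizer θ̂, satisfying X^T θ̂ ∈ ∂‖·‖₁(β̂). If R is a set containing θ̂ and max_{θ ∈ R} |x_i^T θ| < 1 for the i-th column x_i of X, then β̂_i = 0. -/
import Mathlib


open Matrix BigOperators

/-- L1 screening rule: if `θ̂ ∈ R` and `|x_iᵀθ| < 1` on all of `R`, then `β̂_i = 0`. -/
theorem l1_screening {n d : ℕ}
    (X : Matrix (Fin n) (Fin d) ℝ) (y : Fin n → ℝ)
    (βh : Fin d → ℝ) (θh : Fin n → ℝ)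
    (hβ : ∀ β : Fin d → ℝ,
      1 / 2 * ((y - X *ᵥ βh) ⬝ᵥ (y - X *ᵥ βh)) + ∑ i, |βh i| ≤
      1 / 2 * ((y - X *ᵥ β) ⬝ᵥ (y - X *ᵥ β)) + ∑ i, |β i|)
    (hsub : ∀ w : Fin d → ℝ, (Xᵀ *ᵥ θh) ⬝ᵥ (w - βh) + ∑ i, |βh i| ≤ ∑ i, |w i|)
    (R : Set (Fin n → ℝ)) (hθhR : θh ∈ R)
    (i : Fin d) (hscr : ∀ θ ∈ R, |(Xᵀ *ᵥ θ) i| < 1) :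
    βh i = 0 := by
  by_contra hne
  have hc : |(Xᵀ *ᵥ θh) i| < 1 := hscr θh hθhR
  set c := (Xᵀ *ᵥ θh) i with hcdef
  have h1 := hsub (Function.update βh i 0)
  have hdot : (Xᵀ *ᵥ θh) ⬝ᵥ (Function.update βh i 0 - βh) = -(c * βh i) := by
    unfold dotProduct
    rw [Finset.sum_eq_single i]
    · simp [hcdef]
    · intro j _ hj
      simp [Function.update_of_ne hj]
    · simp
  have hsum : ∑ j, |Function.update βh i 0 j| = (∑ j, |βh j|) - |βh i| := by
    have : ∀ j, |Function.update βh i 0 j| = Function.update (fun j => |βh j|) i 0 j := by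
      intro j
      by_cases hj : j = i
      · subst hj; simp
      · simp [Function.update_of_ne hj]
    rw [Finset.sum_congr rfl (fun j _ => this j),
      Finset.sum_update_of_mem (Finset.mem_univ i), Finset.sdiff_singleton_eq_erase]
    rw [← Finset.sum_erase_add _ _ (Finset.mem_univ i)]
    ring
  rw [hdot, hsum] at h1
  have h2 : |βh i| ≤ c * βh i := by linarith
  have h3 : c * βh i ≤ |c| * |βh i| := by
    calc c * βh i ≤ |c * βh i| := le_abs_self _
    _ = |c| * |βh i| := abs_mul _ _
  have h4 : 0 < |βh i| := abs_pos.mpr hne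
  nlinarith
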